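/- Let A ∈ ℝ^{m×n}, x̄ ∈ ℝ^n with R(x̄) < ∞, and ȳ = |A x̄|². Assume: (H.1) R is proper, lower semicontinuous, convex, and even symmetric; (H.2) for every I ⊆ {1,…,m} with |I| ≥ m/2, Ker(A^I) ∩ D_R(x̄) = {0}; R is non-negative; and Ker(R_∞) ∩ Ker(A) = {0}. Let y_k = ȳ + ε_k with σ_k = ‖ε_k‖₂ → 0, and let λ_k > 0 satisfy λ_k → 0 and σ_k²/λ_k → 0. Then for any choice of minimizers x_k of F_{y_k,λ_k}, one has |A x_k| → |A x̄|, R(x_k) → R(x̄), and min(‖x_k − x̄‖₂, ‖x_k + x̄‖₂) → 0 as k → ∞. -/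

import Mathlib

open MeasureTheory ProbabilityTheory Filter
open scoped NNReal ENNReal BigOperators

noncomputable section

/-- The Euclidean (`ℓ²`) norm on `Fin n → ℝ`. -/
def enorm2 {n : ℕ} (x : Fin n → ℝ) : ℝ := Real.sqrt (∑ i, x i ^ 2)

/-- Matrix-vector multiplication for `A ∈ ℝ^{m×n}`. -/
def mulVec' {m n : ℕ} (A : Fin m → Fin n → ℝ) (x : Fin n → ℝ) : Fin m → ℝ :=
  fun i => ∑ j, A i j * x j

/-- The asymptotic (recession) function `R_∞(z) = liminf_{z'→z, t→∞} R(t z')/t`. -/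
def asympFun {n : ℕ} (R : (Fin n → ℝ) → EReal) (z : Fin n → ℝ) : EReal :=
  Filter.liminf (fun p : (Fin n → ℝ) × ℝ => R (p.2 • p.1) * ((p.2⁻¹ : ℝ) : EReal))
    ((nhds z) ×ˢ Filter.atTop)

/-- The noiseless feasible set `{x : |Ax| = √ȳ entrywise}`. -/
def feasSet {m n : ℕ} (A : Fin m → Fin n → ℝ) (ybar : Fin m → ℝ) : Set (Fin n → ℝ) :=
  {x | ∀ r, |mulVec' A x r| = Real.sqrt (ybar r)}

/-- Set of minimizers of `R` over `S`. -/
def argminOn {α β : Type*} [Preorder β] (R : α → β) (S : Set α) : Set α :=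
  {x ∈ S | ∀ z ∈ S, R x ≤ R z}

/-- Convexity for `EReal`-valued functions. -/
def ERealConvex {n : ℕ} (R : (Fin n → ℝ) → EReal) : Prop :=
  ∀ x y : Fin n → ℝ, ∀ a b : ℝ, 0 ≤ a → 0 ≤ b → a + b = 1 →
    R (a • x + b • y) ≤ (a : EReal) * R x + (b : EReal) * R y

/-- Descent cone of `R` at `x̄`. -/
def descentCone {n : ℕ} {β : Type*} [Preorder β] (R : (Fin n → ℝ) → β)
    (xbar : Fin n → ℝ) : Set (Fin n → ℝ) :=
  {z | ∃ t : ℝ, 0 < t ∧ R (xbar + t • z) ≤ R xbar}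

/-- Euclidean unit sphere of `ℝⁿ`. -/
def unitSphere (n : ℕ) : Set (Fin n → ℝ) := {x | enorm2 x = 1}

/-- The constant ν = (1/18)√(π/2). -/
def nu : ℝ := (1 / 18) * Real.sqrt (Real.pi / 2)

/-- Law of a random `m × n` matrix with i.i.d. `N(0, 1/m)` entries. -/
def gaussMatrix (m n : ℕ) : Measure (Fin m → Fin n → ℝ) :=
  Measure.pi fun _ => Measure.pi fun _ => gaussianReal 0 (m : ℝ≥0)⁻¹

/-- Standard Gaussian vector `N(0, Id_n)`. -/
def gaussVec (n : ℕ) : Measure (Fin n → ℝ) := Measure.pi fun _ => gaussianReal 0 1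

/-- Dot product. -/
def dot {n : ℕ} (x y : Fin n → ℝ) : ℝ := ∑ i, x i * y i

/-- Gaussian width of S. -/
def gaussianWidth {n : ℕ} (S : Set (Fin n → ℝ)) : ℝ :=
  ∫ z, sSup ((fun x => dot z x) '' S) ∂(gaussVec n)

/-- `‖A^I x‖₂` : ℓ² norm of the rows of `Ax` indexed by `I`. -/
def rowNorm {m n : ℕ} (A : Fin m → Fin n → ℝ) (I : Finset (Fin m)) (x : Fin n → ℝ) : ℝ :=
  Real.sqrt (∑ i ∈ I, (mulVec' A x i) ^ 2)

/-- Covering number `N(S, δ)` by Euclidean balls of radius `δ` centered in `S`. -/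
def coveringNumber {n : ℕ} (S : Set (Fin n → ℝ)) (δ : ℝ) : ℕ :=
  sInf {k : ℕ | ∃ T : Finset (Fin n → ℝ), T.card = k ∧ ↑T ⊆ S ∧
    S ⊆ ⋃ c ∈ T, {x | enorm2 (x - c) ≤ δ}}

/-- Constrained (Mozorov) feasible set `{x : ‖y − |Ax|²‖₂ ≤ ρ}`. -/
def feasConst {m n : ℕ} (A : Fin m → Fin n → ℝ) (y : Fin m → ℝ) (ρ : ℝ) :
    Set (Fin n → ℝ) :=
  {x | enorm2 (fun i => y i - (mulVec' A x i) ^ 2) ≤ ρ}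

/-- Penalized (Tikhonov) objective `F_{y,λ}(x) = ‖y − |Ax|²‖₂² + λ R(x)`. -/
def Fpen {m n : ℕ} (A : Fin m → Fin n → ℝ) (y : Fin m → ℝ) (lam : ℝ)
    (R : (Fin n → ℝ) → EReal) (x : Fin n → ℝ) : EReal :=
  ((enorm2 (fun i => y i - (mulVec' A x i) ^ 2) ^ 2 : ℝ) : EReal) + (lam : EReal) * R x



namespace Stmt15Aux

lemma enorm2_nonneg {n : ℕ} (x : Fin n → ℝ) : 0 ≤ enorm2 x := Real.sqrt_nonneg _

lemma sum_sq_nonneg {n : ℕ} (x : Fin n → ℝ) : 0 ≤ ∑ i, x i ^ 2 :=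
  Finset.sum_nonneg fun _ _ => sq_nonneg _

lemma abs_le_enorm2 {n : ℕ} (x : Fin n → ℝ) (i : Fin n) : |x i| ≤ enorm2 x := by
  rw [← Real.sqrt_sq_eq_abs]
  exact Real.sqrt_le_sqrt (Finset.single_le_sum (fun j _ => sq_nonneg (x j)) (Finset.mem_univ i))

lemma enorm2_zero {n : ℕ} : enorm2 (0 : Fin n → ℝ) = 0 := by simp [enorm2]

lemma continuous_enorm2 {n : ℕ} : Continuous (enorm2 (n := n)) := by
  unfold enorm2; fun_prop

lemma enorm2_smul {n : ℕ} (c : ℝ) (x : Fin n → ℝ) : enorm2 (c • x) = |c| * enorm2 x := by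
  simp only [enorm2, Pi.smul_apply, smul_eq_mul, mul_pow, ← Finset.mul_sum]
  rw [Real.sqrt_mul (sq_nonneg c), Real.sqrt_sq_eq_abs]

lemma continuous_mulVec' {m n : ℕ} (A : Fin m → Fin n → ℝ) (i : Fin m) :
    Continuous fun x : Fin n → ℝ => mulVec' A x i := by
  unfold mulVec'; fun_prop

lemma mulVec'_sub {m n : ℕ} (A : Fin m → Fin n → ℝ) (x y : Fin n → ℝ) (i : Fin m) :
    mulVec' A (x - y) i = mulVec' A x i - mulVec' A y i := by
  simp [mulVec', mul_sub, Finset.sum_sub_distrib]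

lemma mulVec'_neg {m n : ℕ} (A : Fin m → Fin n → ℝ) (x : Fin n → ℝ) (i : Fin m) :
    mulVec' A (-x) i = -mulVec' A x i := by
  simp [mulVec', ← Finset.sum_neg_distrib]

lemma mulVec'_smul {m n : ℕ} (A : Fin m → Fin n → ℝ) (c : ℝ) (x : Fin n → ℝ) (i : Fin m) :
    mulVec' A (c • x) i = c * mulVec' A x i := by
  simp only [mulVec', Pi.smul_apply, smul_eq_mul, Finset.mul_sum]
  congr 1; funext j; ring

lemma uniq {m n : ℕ} (A : Fin m → Fin n → ℝ) (xbar : Fin n → ℝ) (R : (Fin n → ℝ) → EReal)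
    (hReven : ∀ x, R (-x) = R x)
    (hH2 : ∀ I : Finset (Fin m), (m : ℝ) / 2 ≤ I.card →
      {z : Fin n → ℝ | ∀ i ∈ I, mulVec' A z i = 0} ∩ descentCone R xbar = {0})
    (x : Fin n → ℝ)
    (habs : ∀ i, |mulVec' A x i| = |mulVec' A xbar i|)
    (hle : R x ≤ R xbar) : x = xbar ∨ x = -xbar := by
  classical
  set I := Finset.univ.filter (fun i => mulVec' A x i = mulVec' A xbar i) with hI
  set J := Finset.univ.filter (fun i => mulVec' A x i = -mulVec' A xbar i) with hJ
  have hIJ : (m : ℝ) / 2 ≤ I.card ∨ (m : ℝ) / 2 ≤ J.card := by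
    by_contra h
    push_neg at h
    have hunion : (Finset.univ : Finset (Fin m)) ⊆ I ∪ J := by
      intro i _
      rcases abs_eq_abs.1 (habs i) with h' | h' <;>
        simp [hI, hJ, Finset.mem_union, Finset.mem_filter, h']
    have hc : (m : ℕ) ≤ I.card + J.card := by
      calc m = (Finset.univ : Finset (Fin m)).card := by simp
        _ ≤ (I ∪ J).card := Finset.card_le_card hunion
        _ ≤ I.card + J.card := Finset.card_union_le _ _
    have hcr : (m : ℝ) ≤ (I.card : ℝ) + J.card := by exact_mod_cast hc
    linarith [h.1, h.2]
  rcases hIJ with hcard | hcard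
  · left
    have hz : (x - xbar) ∈ ({z : Fin n → ℝ | ∀ i ∈ I, mulVec' A z i = 0} ∩ descentCone R xbar) := by
      constructor
      · intro i hi
        have := (Finset.mem_filter.1 hi).2
        rw [mulVec'_sub, this, sub_self]
      · exact ⟨1, one_pos, by simpa using hle⟩
    rw [hH2 I hcard] at hz
    have : x - xbar = 0 := hz
    exact sub_eq_zero.1 this
  · right
    have hz : (-x - xbar) ∈ ({z : Fin n → ℝ | ∀ i ∈ J, mulVec' A z i = 0} ∩ descentCone R xbar) := by
      constructor
      · intro i hi
        have h' := (Finset.mem_filter.1 hi).2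
        rw [mulVec'_sub, mulVec'_neg, h', neg_neg, sub_self]
      · exact ⟨1, one_pos, by simpa [hReven] using hle⟩
    rw [hH2 J hcard] at hz
    have h0 : -x - xbar = 0 := hz
    have h1 : -x = xbar := sub_eq_zero.1 h0
    exact neg_eq_iff_eq_neg.1 h1

end Stmt15Aux

open Stmt15Aux in
/-- Γ-convergence of the penalized (Tikhonov) formulation as the noise
and the regularization parameter vanish. -/
theorem statement15 {m n : ℕ} (A : Fin m → Fin n → ℝ) (xbar : Fin n → ℝ)
    (R : (Fin n → ℝ) → EReal)
    (hfin : R xbar ≠ ⊤)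
    (hRbot : ∀ x, R x ≠ ⊥)
    (hRproper : ∃ x, R x ≠ ⊤)
    (hRlsc : LowerSemicontinuous R)
    (hRconv : ERealConvex R)
    (hReven : ∀ x, R (-x) = R x)
    (hH2 : ∀ I : Finset (Fin m), (m : ℝ) / 2 ≤ I.card →
      {z : Fin n → ℝ | ∀ i ∈ I, mulVec' A z i = 0} ∩ descentCone R xbar = {0})
    (hRnonneg : ∀ x, 0 ≤ R x)
    (hker : {z : Fin n → ℝ | asympFun R z = 0} ∩ {z | mulVec' A z = 0} = {0})
    (εk : ℕ → Fin m → ℝ) (lamk : ℕ → ℝ)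
    (hlampos : ∀ k, 0 < lamk k)
    (hσ : Filter.Tendsto (fun k => enorm2 (εk k)) Filter.atTop (nhds 0))
    (hlam : Filter.Tendsto lamk Filter.atTop (nhds 0))
    (hratio : Filter.Tendsto (fun k => enorm2 (εk k) ^ 2 / lamk k) Filter.atTop (nhds 0))
    (xk : ℕ → Fin n → ℝ)
    (hxk : ∀ k, xk k ∈ argminOn
      (Fpen A (fun i => (mulVec' A xbar i) ^ 2 + εk k i) (lamk k) R) Set.univ) :
    Filter.Tendsto (fun k => fun i => |mulVec' A (xk k) i|) Filter.atTop
        (nhds fun i => |mulVec' A xbar i|) ∧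
    Filter.Tendsto (fun k => R (xk k)) Filter.atTop (nhds (R xbar)) ∧
    Filter.Tendsto (fun k => min (enorm2 (xk k - xbar)) (enorm2 (xk k + xbar)))
        Filter.atTop (nhds 0) := by
  classical
  set res : ℕ → Fin m → ℝ :=
    fun k i => (mulVec' A xbar i) ^ 2 + εk k i - (mulVec' A (xk k) i) ^ 2 with hresdef
  set rb : ℝ := (R xbar).toReal with hrbdef
  have hRxbar : R xbar = (rb : EReal) := (EReal.coe_toReal hfin (hRbot xbar)).symm
  have hrb0 : (0:ℝ) ≤ rb := by
    have h := hRnonneg xbar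
    rw [hRxbar] at h
    exact_mod_cast h
  -- Key minimality inequality
  have key : ∀ k, ((enorm2 (res k) ^ 2 : ℝ) : EReal) + (lamk k : EReal) * R (xk k)
      ≤ ((enorm2 (εk k) ^ 2 : ℝ) : EReal) + (lamk k : EReal) * (rb : EReal) := by
    intro k
    have h := (hxk k).2 xbar (Set.mem_univ _)
    simp only [Fpen] at h
    rw [hRxbar] at h
    have e2 : (fun i => (mulVec' A xbar i) ^ 2 + εk k i - (mulVec' A xbar i) ^ 2) = εk k := by
      funext i; ring
    rw [e2] at h
    have e1 : (fun i => (mulVec' A xbar i) ^ 2 + εk k i - (mulVec' A (xk k) i) ^ 2) = res k := rfl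
    rw [e1] at h
    exact h
  -- Finiteness of R (xk k)
  have hfinxk : ∀ k, R (xk k) ≠ ⊤ := by
    intro k hT
    have h := key k
    rw [hT, EReal.mul_top_of_pos (by exact_mod_cast hlampos k), EReal.coe_add_top,
      ← EReal.coe_mul, ← EReal.coe_add] at h
    exact (EReal.coe_ne_top _) (top_le_iff.1 h)
  set ρ : ℕ → ℝ := fun k => (R (xk k)).toReal with hρdef
  have hRxk : ∀ k, R (xk k) = ((ρ k : ℝ) : EReal) :=
    fun k => (EReal.coe_toReal (hfinxk k) (hRbot _)).symm
  have hρ0 : ∀ k, 0 ≤ ρ k := by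
    intro k
    have h := hRnonneg (xk k)
    rw [hRxk k] at h
    exact_mod_cast h
  have main : ∀ k, enorm2 (res k) ^ 2 + lamk k * ρ k ≤ enorm2 (εk k) ^ 2 + lamk k * rb := by
    intro k
    have h := key k
    rw [hRxk k, ← EReal.coe_mul, ← EReal.coe_add, ← EReal.coe_mul, ← EReal.coe_add] at h
    exact_mod_cast h
  have hA1 : ∀ k, enorm2 (res k) ^ 2 ≤ enorm2 (εk k) ^ 2 + lamk k * rb := by
    intro k
    have := mul_nonneg (hlampos k).le (hρ0 k)
    linarith [main k]
  have hA2 : ∀ k, ρ k ≤ enorm2 (εk k) ^ 2 / lamk k + rb := by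
    intro k
    have h0 : (0:ℝ) ≤ enorm2 (res k) ^ 2 := sq_nonneg _
    have h1 : lamk k * ρ k ≤ enorm2 (εk k) ^ 2 + lamk k * rb := by linarith [main k]
    have h2 : ρ k ≤ (enorm2 (εk k) ^ 2 + lamk k * rb) / lamk k := by
      rw [le_div_iff₀ (hlampos k)]
      linarith
    rwa [add_div, mul_div_cancel_left₀ _ (ne_of_gt (hlampos k))] at h2
  -- Residual tends to zero
  have hσ2 : Filter.Tendsto (fun k => enorm2 (εk k) ^ 2) Filter.atTop (nhds 0) := by
    simpa using hσ.pow 2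
  have hd0 : Filter.Tendsto (fun k => enorm2 (εk k) ^ 2 + lamk k * rb) Filter.atTop (nhds 0) := by
    simpa using hσ2.add (hlam.mul_const rb)
  have hres2 : Filter.Tendsto (fun k => enorm2 (res k) ^ 2) Filter.atTop (nhds 0) :=
    squeeze_zero (fun k => sq_nonneg _) hA1 hd0
  have hresn : Filter.Tendsto (fun k => enorm2 (res k)) Filter.atTop (nhds 0) := by
    have h := (Real.continuous_sqrt.tendsto 0).comp hres2
    rw [Real.sqrt_zero] at h
    exact h.congr fun k => Real.sqrt_sq (enorm2_nonneg _)
  have hres_i : ∀ i, Filter.Tendsto (fun k => res k i) Filter.atTop (nhds 0) := by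
    intro i
    exact squeeze_zero_norm (fun k => by rw [Real.norm_eq_abs]; exact abs_le_enorm2 (res k) i) hresn
  have hε_i : ∀ i, Filter.Tendsto (fun k => εk k i) Filter.atTop (nhds 0) := by
    intro i
    exact squeeze_zero_norm (fun k => by rw [Real.norm_eq_abs]; exact abs_le_enorm2 (εk k) i) hσ
  have hq : ∀ i, Filter.Tendsto (fun k => (mulVec' A (xk k) i) ^ 2) Filter.atTop
      (nhds ((mulVec' A xbar i) ^ 2)) := by
    intro i
    have h : Filter.Tendsto (fun k => (mulVec' A xbar i) ^ 2 + (εk k i - res k i)) Filter.atTop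
        (nhds ((mulVec' A xbar i) ^ 2 + (0 - 0))) :=
      tendsto_const_nhds.add ((hε_i i).sub (hres_i i))
    have e : (fun k => (mulVec' A xbar i) ^ 2 + (εk k i - res k i))
        = fun k => (mulVec' A (xk k) i) ^ 2 := by
      funext k; simp only [hresdef]; ring
    rw [e] at h
    simpa using h
  -- Claim 1
  have claim1 : Filter.Tendsto (fun k => fun i => |mulVec' A (xk k) i|) Filter.atTop
      (nhds fun i => |mulVec' A xbar i|) := by
    rw [tendsto_pi_nhds]
    intro i
    have h := (Real.continuous_sqrt.tendsto _).comp (hq i)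
    have h2 : Filter.Tendsto (fun k => |mulVec' A (xk k) i|) Filter.atTop
        (nhds (Real.sqrt ((mulVec' A xbar i) ^ 2))) :=
      h.congr fun k => Real.sqrt_sq_eq_abs _
    rwa [Real.sqrt_sq_eq_abs] at h2
  have claim1i := tendsto_pi_nhds.1 claim1
  -- Per-coordinate bound on |A xk|
  have hQ : ∀ i, ∃ Q : ℝ, ∀ k, |mulVec' A (xk k) i| ≤ Q := by
    intro i
    obtain ⟨Q, hQ⟩ := (claim1i i).bddAbove_range
    exact ⟨Q, fun k => hQ (Set.mem_range_self k)⟩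
  -- bound for ρ
  have hd' : Filter.Tendsto (fun k => enorm2 (εk k) ^ 2 / lamk k + rb) Filter.atTop (nhds rb) := by
    simpa using hratio.add_const rb
  obtain ⟨D, hDmem⟩ := hd'.bddAbove_range
  have hDle : ∀ k, ρ k ≤ D := fun k => (hA2 k).trans (hDmem (Set.mem_range_self k))
  -- Boundedness of (xk)
  have hbdd : ∃ M : ℝ, ∀ k, enorm2 (xk k) ≤ M := by
    by_contra hM
    push_neg at hM
    have hsel : ∀ j : ℕ, ∃ k, (j : ℝ) < enorm2 (xk k) := fun j => hM j
    choose φ hφ using hsel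
    set t : ℕ → ℝ := fun j => enorm2 (xk (φ j)) with htdef
    have htpos : ∀ j, 0 < t j := fun j => lt_of_le_of_lt (Nat.cast_nonneg j) (hφ j)
    have httop : Filter.Tendsto t Filter.atTop Filter.atTop :=
      tendsto_atTop_mono (fun j => (hφ j).le) tendsto_natCast_atTop_atTop
    set z : ℕ → Fin n → ℝ := fun j => (t j)⁻¹ • xk (φ j) with hzdef
    have hz1 : ∀ j, enorm2 (z j) = 1 := by
      intro j
      simp only [hzdef]
      rw [enorm2_smul, abs_of_pos (inv_pos.2 (htpos j))]
      exact inv_mul_cancel₀ (htpos j).ne'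
    have hzball : ∀ j, z j ∈ Metric.closedBall (0 : Fin n → ℝ) 1 := by
      intro j
      rw [Metric.mem_closedBall, dist_zero_right, pi_norm_le_iff_of_nonneg zero_le_one]
      intro i
      rw [Real.norm_eq_abs]
      exact (abs_le_enorm2 _ i).trans (hz1 j).le
    obtain ⟨zi, _, ψ, hψmono, hψlim⟩ :=
      (isCompact_closedBall (0 : Fin n → ℝ) 1).tendsto_subseq hzball
    have hzi1 : enorm2 zi = 1 := by
      have h1 : Filter.Tendsto (fun j => enorm2 (z (ψ j))) Filter.atTop (nhds (enorm2 zi)) :=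
        (continuous_enorm2.tendsto _).comp hψlim
      have h2 : Filter.Tendsto (fun j => enorm2 (z (ψ j))) Filter.atTop (nhds 1) := by
        simp only [hz1]; exact tendsto_const_nhds
      exact tendsto_nhds_unique h1 h2
    have htψ : Filter.Tendsto (fun j => t (ψ j)) Filter.atTop Filter.atTop :=
      httop.comp hψmono.tendsto_atTop
    have htinv : Filter.Tendsto (fun j => (t (ψ j))⁻¹) Filter.atTop (nhds 0) :=
      htψ.inv_tendsto_atTop
    have hAz : ∀ i, mulVec' A zi i = 0 := by
      intro i
      obtain ⟨Q, hQi⟩ := hQ i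
      have h1 : Filter.Tendsto (fun j => mulVec' A (z (ψ j)) i) Filter.atTop
          (nhds (mulVec' A zi i)) := ((continuous_mulVec' A i).tendsto _).comp hψlim
      have h2 : Filter.Tendsto (fun j => mulVec' A (z (ψ j)) i) Filter.atTop (nhds 0) := by
        apply squeeze_zero_norm (a := fun j => (t (ψ j))⁻¹ * Q)
        · intro j
          rw [Real.norm_eq_abs]
          simp only [hzdef]
          rw [mulVec'_smul, abs_mul, abs_of_pos (inv_pos.2 (htpos _))]
          exact mul_le_mul_of_nonneg_left (hQi _) (inv_pos.2 (htpos _)).le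
        · simpa using htinv.mul_const Q
      exact tendsto_nhds_unique h1 h2
    have hmap : Filter.Tendsto (fun j => (z (ψ j), t (ψ j))) Filter.atTop
        ((nhds zi) ×ˢ Filter.atTop) := hψlim.prodMk htψ
    have hlim0 : Filter.Tendsto
        (fun j => R ((t (ψ j)) • z (ψ j)) * (((t (ψ j))⁻¹ : ℝ) : EReal))
        Filter.atTop (nhds (0 : EReal)) := by
      have heq : ∀ j, R ((t (ψ j)) • z (ψ j)) * (((t (ψ j))⁻¹ : ℝ) : EReal)
          = ((ρ (φ (ψ j)) * (t (ψ j))⁻¹ : ℝ) : EReal) := by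
        intro j
        have hsz : (t (ψ j)) • z (ψ j) = xk (φ (ψ j)) := by
          simp only [hzdef]
          rw [smul_smul, mul_inv_cancel₀ (htpos _).ne', one_smul]
        rw [hsz, hRxk, ← EReal.coe_mul]
      simp only [heq]
      rw [← EReal.coe_zero, EReal.tendsto_coe]
      apply squeeze_zero (g := fun j => D * (t (ψ j))⁻¹)
      · intro j; exact mul_nonneg (hρ0 _) (inv_pos.2 (htpos _)).le
      · intro j; exact mul_le_mul_of_nonneg_right (hDle _) (inv_pos.2 (htpos _)).le
      · simpa using htinv.const_mul D
    have hAs_le : asympFun R zi ≤ 0 := by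
      unfold asympFun
      have hle1 := Filter.liminf_le_liminf_of_le hmap
        (u := fun p : (Fin n → ℝ) × ℝ => R (p.2 • p.1) * ((p.2⁻¹ : ℝ) : EReal))
      rw [← Filter.liminf_comp] at hle1
      refine hle1.trans_eq ?_
      have : ((fun p : (Fin n → ℝ) × ℝ => R (p.2 • p.1) * ((p.2⁻¹ : ℝ) : EReal))
          ∘ (fun j => (z (ψ j), t (ψ j))))
          = fun j => R ((t (ψ j)) • z (ψ j)) * (((t (ψ j))⁻¹ : ℝ) : EReal) := rfl
      rw [this, hlim0.liminf_eq]
    have hAs_ge : (0 : EReal) ≤ asympFun R zi := by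
      unfold asympFun
      refine Filter.le_liminf_of_le (h := ?_)
      have hev : ∀ᶠ p : (Fin n → ℝ) × ℝ in (nhds zi) ×ˢ Filter.atTop, (0:ℝ) ≤ p.2 :=
        (Filter.eventually_ge_atTop (0:ℝ)).prod_inr _
      exact hev.mono fun p hp =>
        mul_nonneg (hRnonneg _) (by exact_mod_cast inv_nonneg.2 hp)
    have hzi0 : zi = 0 := by
      have hmem : zi ∈ ({z : Fin n → ℝ | asympFun R z = 0} ∩ {z | mulVec' A z = 0}) :=
        ⟨le_antisymm hAs_le hAs_ge, by funext i; exact hAz i⟩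
      rw [hker] at hmem
      exact hmem
    rw [hzi0, enorm2_zero] at hzi1
    exact zero_ne_one hzi1
  -- Cluster point analysis
  have cluster : ∀ (x : Fin n → ℝ) (φ : ℕ → ℕ), Filter.Tendsto φ Filter.atTop Filter.atTop →
      Filter.Tendsto (fun j => xk (φ j)) Filter.atTop (nhds x) →
      (x = xbar ∨ x = -xbar) ∧
        Filter.Tendsto (fun j => R (xk (φ j))) Filter.atTop (nhds (R xbar)) := by
    intro x φ hφ hlim
    have habs : ∀ i, |mulVec' A x i| = |mulVec' A xbar i| := by
      intro i
      have h1 : Filter.Tendsto (fun j => |mulVec' A (xk (φ j)) i|) Filter.atTop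
          (nhds (|mulVec' A x i|)) :=
        ((continuous_abs.comp (continuous_mulVec' A i)).tendsto _).comp hlim
      exact tendsto_nhds_unique h1 ((claim1i i).comp hφ)
    have hlimsup : Filter.limsup (fun j => R (xk (φ j))) Filter.atTop ≤ R xbar := by
      have h1 : Filter.Tendsto
          (fun j => ((enorm2 (εk (φ j)) ^ 2 / lamk (φ j) + rb : ℝ) : EReal))
          Filter.atTop (nhds ((rb : ℝ) : EReal)) := EReal.tendsto_coe.2 (hd'.comp hφ)
      have h2 : Filter.limsup (fun j => R (xk (φ j))) Filter.atTop ≤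
          Filter.limsup (fun j => ((enorm2 (εk (φ j)) ^ 2 / lamk (φ j) + rb : ℝ) : EReal))
            Filter.atTop := by
        refine Filter.limsup_le_limsup (Filter.Eventually.of_forall fun j => ?_)
        show R (xk (φ j)) ≤ ((enorm2 (εk (φ j)) ^ 2 / lamk (φ j) + rb : ℝ) : EReal)
        rw [hRxk]
        exact_mod_cast hA2 (φ j)
      rw [h1.limsup_eq] at h2
      rwa [hRxbar]
    have hliminf : R x ≤ Filter.liminf (fun j => R (xk (φ j))) Filter.atTop := by
      apply le_of_forall_lt
      intro c hc
      obtain ⟨c', hcc', hc'x⟩ := exists_between hc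
      have hev : ∀ᶠ j in Filter.atTop, c' ≤ R (xk (φ j)) :=
        (hlim.eventually (hRlsc x c' hc'x)).mono fun j hj => hj.le
      exact lt_of_lt_of_le hcc' (Filter.le_liminf_of_le (h := hev))
    have hRxle : R x ≤ R xbar :=
      hliminf.trans ((Filter.liminf_le_limsup).trans hlimsup)
    have hx := uniq A xbar R hReven hH2 x habs hRxle
    have hRx : R x = R xbar := by
      rcases hx with h | h
      · rw [h]
      · rw [h, hReven]
    refine ⟨hx, tendsto_of_le_liminf_of_limsup_le ?_ hlimsup⟩
    rw [← hRx]
    exact hliminf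
  obtain ⟨M, hM⟩ := hbdd
  have hball : ∀ k, xk k ∈ Metric.closedBall (0 : Fin n → ℝ) (max M 0) := by
    intro k
    rw [Metric.mem_closedBall, dist_zero_right, pi_norm_le_iff_of_nonneg (le_max_right M 0)]
    intro i
    rw [Real.norm_eq_abs]
    exact (abs_le_enorm2 _ i).trans ((hM k).trans (le_max_left M 0))
  have subseq : ∀ ns : ℕ → ℕ, Filter.Tendsto ns Filter.atTop Filter.atTop →
      ∃ (ms : ℕ → ℕ) (x : Fin n → ℝ), (x = xbar ∨ x = -xbar) ∧
        Filter.Tendsto (fun j => xk (ns (ms j))) Filter.atTop (nhds x) ∧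
        Filter.Tendsto (fun j => R (xk (ns (ms j)))) Filter.atTop (nhds (R xbar)) := by
    intro ns hns
    obtain ⟨x, _, ms, hmsmono, hmslim⟩ :=
      (isCompact_closedBall (0 : Fin n → ℝ) (max M 0)).tendsto_subseq
        (x := fun j => xk (ns j)) (fun j => hball _)
    have h := cluster x (fun j => ns (ms j)) (hns.comp hmsmono.tendsto_atTop) hmslim
    exact ⟨ms, x, h.1, hmslim, h.2⟩
  refine ⟨claim1, ?_, ?_⟩
  · apply Filter.tendsto_of_subseq_tendsto
    intro ns hns
    obtain ⟨ms, x, _, _, hR⟩ := subseq ns hns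
    exact ⟨ms, hR⟩
  · apply Filter.tendsto_of_subseq_tendsto
    intro ns hns
    obtain ⟨ms, x, hx, hlim, _⟩ := subseq ns hns
    refine ⟨ms, ?_⟩
    rcases hx with h | h
    · have h1 : Filter.Tendsto (fun j => enorm2 (xk (ns (ms j)) - xbar)) Filter.atTop
          (nhds 0) := by
        have h2 := (continuous_enorm2.tendsto _).comp (hlim.sub (tendsto_const_nhds (x := xbar)))
        rw [h] at h2
        simpa [Function.comp_def, sub_self, enorm2_zero] using h2
      exact squeeze_zero (fun j => le_min (enorm2_nonneg _) (enorm2_nonneg _))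
        (fun j => min_le_left _ _) h1
    · have h1 : Filter.Tendsto (fun j => enorm2 (xk (ns (ms j)) + xbar)) Filter.atTop
          (nhds 0) := by
        have h2 := (continuous_enorm2.tendsto _).comp (hlim.add (tendsto_const_nhds (x := xbar)))
        rw [h] at h2
        simpa [Function.comp_def, neg_add_cancel, enorm2_zero] using h2
      exact squeeze_zero (fun j => le_min (enorm2_nonneg _) (enorm2_nonneg _))
        (fun j => min_le_right _ _) h1

end
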